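/- arXiv:2506.19199 — 3 statements merged into one kernel-verified Lean document; each statement's English description precedes it below -/
import Mathlib

section
/- (Schoenberg criterion, necessity) If E is the Euclidean distance matrix of points p₁,…,p_n in ℝ^d, then −VᵀEV is positive semidefinite for any matrix V whose column range equals the orthogonal complement of the all-ones vector 𝟏ₙ. -/
open Matrix RealInnerProductSpace

theorem schoenberg_necessity (n d : ℕ) (p : Fin n → EuclideanSpace ℝ (Fin d))
    (V : Matrix (Fin n) (Fin (n - 1)) ℝ)
    (hV : ∀ x : Fin n → ℝ, x ∈ Set.range V.mulVec ↔ ∑ i, x i = 0) :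
    let E : Matrix (Fin n) (Fin n) ℝ := Matrix.of fun i j => ‖p i - p j‖ ^ 2
    (-(Vᵀ * E * V)).PosSemidef := by
  intro E
  have hEsymm : Eᵀ = E := by
    ext i j
    simp [E, norm_sub_rev]
  have key : ∀ y : Fin n → ℝ, (∑ i, y i = 0) →
      y ⬝ᵥ E.mulVec y = -(2 * ‖∑ i, y i • p i‖ ^ 2) := by
    intro y hy
    have h1 : (inner ℝ (∑ i, y i • p i) (∑ j, y j • p j) : ℝ)
        = ∑ i, ∑ j, y i * y j * (inner ℝ (p i) (p j) : ℝ) := by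
      rw [sum_inner]
      refine Finset.sum_congr rfl fun i _ => ?_
      rw [inner_sum]
      refine Finset.sum_congr rfl fun j _ => ?_
      rw [real_inner_smul_left, real_inner_smul_right]
      ring
    have h2 : y ⬝ᵥ E.mulVec y
        = ∑ i, ∑ j, y i * y j * (‖p i‖^2 - 2 * (inner ℝ (p i) (p j) : ℝ) + ‖p j‖^2) := by
      simp only [dotProduct, mulVec, dotProduct, E, of_apply, Finset.mul_sum]
      refine Finset.sum_congr rfl fun i _ => ?_
      refine Finset.sum_congr rfl fun j _ => ?_
      rw [← norm_sub_sq_real]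
      ring
    rw [h2]
    have expand : ∀ i j : Fin n, y i * y j * (‖p i‖^2 - 2 * (inner ℝ (p i) (p j) : ℝ) + ‖p j‖^2)
        = y i * ‖p i‖ ^ 2 * y j + y i * (y j * ‖p j‖ ^ 2)
          - 2 * (y i * y j * (inner ℝ (p i) (p j) : ℝ)) := fun i j => by ring
    simp only [expand, Finset.sum_sub_distrib, Finset.sum_add_distrib,
      ← Finset.mul_sum, ← Finset.sum_mul, hy, mul_zero, zero_mul, add_zero, zero_add, zero_sub]
    rw [← h1, real_inner_self_eq_norm_sq]
  rw [posSemidef_iff_dotProduct_mulVec]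
  constructor
  · show (-(Vᵀ * E * V))ᴴ = _
    rw [conjTranspose_neg]
    congr 1
    have : (Vᵀ * E * V)ᴴ = (Vᵀ * E * V)ᵀ := by
      ext i j; simp [conjTranspose_apply]
    rw [this, transpose_mul, transpose_mul, transpose_transpose, hEsymm, Matrix.mul_assoc]
  · intro x
    have hy : ∑ i, V.mulVec x i = 0 := (hV (V.mulVec x)).mp ⟨x, rfl⟩
    have h4 : x ⬝ᵥ (Vᵀ * E * V).mulVec x = (V.mulVec x) ⬝ᵥ E.mulVec (V.mulVec x) := by
      rw [← mulVec_mulVec, ← mulVec_mulVec, dotProduct_mulVec, vecMul_transpose]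
    have := key (V.mulVec x) hy
    simp only [star_trivial, neg_mulVec, dotProduct_neg, h4, this, neg_neg]
    positivity
end

section
/- (Schoenberg criterion, sufficiency) Let E be a hollow symmetric n×n matrix with nonnegative entries, and let V_c = I − (1/n)𝟏𝟏ᵀ be the geometric centering matrix. If −(1/2)·V_c E V_c is positive semidefinite of rank r, then there exist points p₁,…,p_n in ℝ^r with E_{ij} = ‖p_i − p_j‖² for all i,j. -/
open Matrix

/-- Rank factorization of a real PSD matrix of rank `r`. -/
lemma psd_factorization {n r : ℕ} {G : Matrix (Fin n) (Fin n) ℝ}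
    (hG : G.PosSemidef) (hr : G.rank = r) :
    ∃ B : Matrix (Fin n) (Fin r) ℝ, ∀ i j, G i j = ∑ t, B i t * B j t := by
  have hH := hG.isHermitian
  set eig := hH.eigenvalues with heig
  set U : Matrix (Fin n) (Fin n) ℝ := (hH.eigenvectorUnitary : Matrix (Fin n) (Fin n) ℝ) with hU
  have hspec := hH.spectral_theorem
  have hcard : Fintype.card {k // eig k ≠ 0} = r := by
    rw [← hH.rank_eq_card_non_zero_eigs, hr]
  have e : Fin r ≃ {k // eig k ≠ 0} := (Fintype.equivFinOfCardEq hcard).symm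
  refine ⟨fun i t => Real.sqrt (eig (e t)) * U i (e t), fun i j => ?_⟩
  have hentry : G i j = ∑ k, eig k * (U i k * U j k) := by
    conv_lhs => rw [hspec, Unitary.conjStarAlgAut_apply]
    simp only [Matrix.mul_apply, Matrix.diagonal_apply, mul_ite, mul_zero,
      Finset.sum_ite_eq', Finset.mem_univ, if_true]
    refine Finset.sum_congr rfl fun k _ => ?_
    simp only [Matrix.star_apply, star_trivial, Function.comp_apply, RCLike.ofReal_real_eq_id,
      id_eq]
    ring
  rw [hentry]
  have hnn : ∀ k, 0 ≤ eig k := hG.eigenvalues_nonneg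
  calc ∑ k, eig k * (U i k * U j k)
      = ∑ k ∈ Finset.univ.filter (fun k => eig k ≠ 0), eig k * (U i k * U j k) := by
        refine (Finset.sum_subset (Finset.filter_subset _ _) fun x _ hx => ?_).symm
        simp only [Finset.mem_filter, Finset.mem_univ, true_and, not_not] at hx
        simp [hx]
    _ = ∑ s : {k // eig k ≠ 0}, eig s.1 * (U i s.1 * U j s.1) :=
        Finset.sum_subtype _ (by simp) _
    _ = ∑ t : Fin r, eig (e t) * (U i (e t) * U j (e t)) := (Equiv.sum_comp e _).symm
    _ = ∑ t, (Real.sqrt (eig (e t)) * U i (e t)) * (Real.sqrt (eig (e t)) * U j (e t)) := by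
        refine Finset.sum_congr rfl fun t _ => ?_
        rw [show ∀ a b c : ℝ, (a*b)*(a*c) = (a*a)*(b*c) by intros; ring,
          Real.mul_self_sqrt (hnn _)]

theorem schoenberg_sufficiency (n r : ℕ) (hn : 0 < n)
    (E : Matrix (Fin n) (Fin n) ℝ)
    (hsymm : E.IsSymm) (hnonneg : ∀ i j, 0 ≤ E i j) (hhollow : ∀ i, E i i = 0)
    (Vc : Matrix (Fin n) (Fin n) ℝ)
    (hVc : Vc = 1 - (n : ℝ)⁻¹ • Matrix.vecMulVec (fun _ => (1 : ℝ)) (fun _ => (1 : ℝ)))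
    (hpsd : ((-(1/2 : ℝ)) • (Vc * E * Vc)).PosSemidef)
    (hrank : ((-(1/2 : ℝ)) • (Vc * E * Vc)).rank = r) :
    ∃ p : Fin n → EuclideanSpace ℝ (Fin r), ∀ i j, E i j = ‖p i - p j‖ ^ 2 := by
  set G := ((-(1/2 : ℝ)) • (Vc * E * Vc)) with hG
  have hEsym : ∀ i j, E j i = E i j := fun i j => by
    conv_lhs => rw [← hsymm]
    rfl
  set c : ℝ := (n : ℝ)⁻¹ with hc
  set J : Matrix (Fin n) (Fin n) ℝ :=
    Matrix.vecMulVec (fun _ => (1 : ℝ)) (fun _ => (1 : ℝ)) with hJ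
  set R : Fin n → ℝ := fun i => ∑ k, E i k with hR
  set T : ℝ := ∑ k, ∑ l, E k l with hT
  have hJE : ∀ i j, (J * E) i j = R j := by
    intro i j
    simp only [hJ, Matrix.mul_apply, Matrix.vecMulVec_apply, one_mul, hR]
    exact Finset.sum_congr rfl fun k _ => hEsym j k
  have hEJ : ∀ i j, (E * J) i j = R i := by
    intro i j
    simp [hJ, Matrix.mul_apply, Matrix.vecMulVec_apply, hR]
  have hJEJ : ∀ i j, (J * E * J) i j = T := by
    intro i j
    simp only [Matrix.mul_apply, hJ, Matrix.vecMulVec_apply, mul_one]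
    calc ∑ l, (∑ k, (1:ℝ) * E k l) = ∑ l, ∑ k, E k l := by simp
      _ = ∑ k, ∑ l, E k l := Finset.sum_comm
  have hGentry : ∀ i j, G i j = (-(1/2 : ℝ)) * (E i j - c * R j - c * R i + c * c * T) := by
    intro i j
    have h1 : (Vc * E * Vc) i j = E i j - c * R j - c * R i + c * c * T := by
      rw [hVc]
      simp only [Matrix.sub_mul, Matrix.mul_sub, Matrix.one_mul, Matrix.mul_one,
        Matrix.smul_mul, Matrix.mul_smul, Matrix.sub_apply, Matrix.smul_apply,
        smul_eq_mul, smul_smul]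
      rw [hJE, hEJ, hJEJ]
      ring
    rw [hG, Matrix.smul_apply, h1, smul_eq_mul]
  have hkey : ∀ i j, E i j = G i i + G j j - 2 * G i j := by
    intro i j
    simp only [hGentry, hhollow, hEsym]
    ring
  obtain ⟨B, hB⟩ := psd_factorization hpsd hrank
  set p : Fin n → EuclideanSpace ℝ (Fin r) :=
    fun i => (WithLp.equiv 2 (Fin r → ℝ)).symm (B i) with hp
  refine ⟨p, fun i j => ?_⟩
  have hsub : ∀ t, (p i - p j) t = B i t - B j t := fun t => rfl
  have hnorm : ‖p i - p j‖ ^ 2 = ∑ t, (B i t - B j t) ^ 2 := by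
    rw [EuclideanSpace.norm_eq, Real.sq_sqrt (Finset.sum_nonneg fun t _ => sq_nonneg _)]
    refine Finset.sum_congr rfl fun t _ => ?_
    rw [hsub, Real.norm_eq_abs, sq_abs]
  rw [hnorm, hkey i j]
  have hexp : ∑ t, (B i t - B j t) ^ 2 =
      (∑ t, B i t * B i t) + (∑ t, B j t * B j t) - 2 * ∑ t, B i t * B j t := by
    rw [← Finset.sum_add_distrib, Finset.mul_sum, ← Finset.sum_sub_distrib]
    exact Finset.sum_congr rfl fun t _ => by ring
  rw [hexp, ← hB, ← hB, ← hB]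
end

section
/- (Orthogonal Procrustes) Let X, Y ∈ ℝ^{3×n} and let Y·Xᵀ = U·S·Vᵀ be a singular value decomposition. Then Q* = V·Uᵀ minimizes ‖X − Q·Y‖_F over all orthogonal matrices Q ∈ O(3). -/
open Matrix

/-- Frobenius norm of a real matrix. -/
noncomputable def frobNorm {m n : Type*} [Fintype m] [Fintype n]
    (A : Matrix m n ℝ) : ℝ := Real.sqrt (∑ i, ∑ j, A i j ^ 2)

lemma frob_sq_eq_trace {m n : Type*} [Fintype m] [Fintype n] [DecidableEq n]
    (A : Matrix m n ℝ) : ∑ i, ∑ j, A i j ^ 2 = trace (Aᵀ * A) := by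
  rw [Finset.sum_comm]
  simp [trace, Matrix.mul_apply, Matrix.diag, sq]

lemma diag_le_one {Z : Matrix (Fin 3) (Fin 3) ℝ} (hZ : Zᵀ * Z = 1) (i : Fin 3) :
    Z i i ≤ 1 := by
  have h : ∑ k, Z k i * Z k i = 1 := by
    have := congrFun (congrFun hZ i) i
    simpa [Matrix.mul_apply, Matrix.one_apply] using this
  have h2 : Z i i ^ 2 ≤ 1 := by
    calc Z i i ^ 2 ≤ ∑ k, Z k i ^ 2 :=
          Finset.single_le_sum (f := fun k => Z k i ^ 2)
            (fun k _ => sq_nonneg _) (Finset.mem_univ i)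
      _ = 1 := by simpa [sq] using h
  nlinarith [h2]

theorem orthogonal_procrustes (n : ℕ) (X Y : Matrix (Fin 3) (Fin n) ℝ)
    (U S V : Matrix (Fin 3) (Fin 3) ℝ)
    (hU : Uᵀ * U = 1) (hV : Vᵀ * V = 1)
    (hS : ∃ d : Fin 3 → ℝ, S = Matrix.diagonal d ∧ ∀ i, 0 ≤ d i)
    (hSVD : Y * Xᵀ = U * S * Vᵀ) :
    ∀ Q : Matrix (Fin 3) (Fin 3) ℝ, Qᵀ * Q = 1 →
      frobNorm (X - (V * Uᵀ) * Y) ≤ frobNorm (X - Q * Y) := by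
  intro Q hQ
  obtain ⟨d, hSd, hd⟩ := hS
  have hVVt : V * Vᵀ = 1 := mul_eq_one_comm.mp hV
  have hUUt : U * Uᵀ = 1 := mul_eq_one_comm.mp hU
  -- trace bound for any orthogonal R
  have key : ∀ R : Matrix (Fin 3) (Fin 3) ℝ, Rᵀ * R = 1 →
      trace (R * (Y * Xᵀ)) ≤ ∑ i, d i := by
    intro R hR
    have hZ : (Vᵀ * R * U)ᵀ * (Vᵀ * R * U) = 1 := by
      have e : (Vᵀ * R * U)ᵀ * (Vᵀ * R * U)
          = Uᵀ * (Rᵀ * ((V * Vᵀ) * (R * U))) := by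
        simp [Matrix.transpose_mul, Matrix.mul_assoc]
      rw [e, hVVt, Matrix.one_mul, ← Matrix.mul_assoc Rᵀ R U, hR, Matrix.one_mul, hU]
    have htr : trace (R * (Y * Xᵀ)) = ∑ i, (Vᵀ * R * U) i i * d i := by
      rw [hSVD]
      have e1 : R * (U * S * Vᵀ) = (R * U * S) * Vᵀ := by
        simp [Matrix.mul_assoc]
      rw [e1, trace_mul_comm, ← Matrix.mul_assoc, ← Matrix.mul_assoc, hSd]
      simp [trace, Matrix.diag, Matrix.mul_diagonal]
    rw [htr]
    apply Finset.sum_le_sum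
    intro i _
    have := diag_le_one hZ i
    have := hd i
    nlinarith
  -- trace of optimal choice
  have hopt : trace ((V * Uᵀ) * (Y * Xᵀ)) = ∑ i, d i := by
    rw [hSVD]
    have e : (V * Uᵀ) * (U * S * Vᵀ) = V * ((Uᵀ * U) * (S * Vᵀ)) := by
      simp [Matrix.mul_assoc]
    rw [e, hU, Matrix.one_mul, ← Matrix.mul_assoc, trace_mul_comm,
      ← Matrix.mul_assoc, hV, Matrix.one_mul, hSd]
    simp [trace, Matrix.diag]
  have hQ0 : (V * Uᵀ)ᵀ * (V * Uᵀ) = 1 := by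
    have e : (V * Uᵀ)ᵀ * (V * Uᵀ) = U * ((Vᵀ * V) * Uᵀ) := by
      simp [Matrix.transpose_mul, Matrix.mul_assoc]
    rw [e, hV, Matrix.one_mul, hUUt]
  -- expansion of the squared norm
  have expand : ∀ R : Matrix (Fin 3) (Fin 3) ℝ, Rᵀ * R = 1 →
      trace ((X - R * Y)ᵀ * (X - R * Y)) =
        trace (Xᵀ * X) + trace (Yᵀ * Y) - 2 * trace (R * (Y * Xᵀ)) := by
    intro R hR
    have h1 : (X - R * Y)ᵀ * (X - R * Y)
        = Xᵀ * X - Xᵀ * (R * Y) - (R * Y)ᵀ * X + Yᵀ * (Rᵀ * R * Y) := by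
      simp [Matrix.transpose_sub, Matrix.sub_mul, Matrix.mul_sub,
        Matrix.transpose_mul, Matrix.mul_assoc]
      abel
    rw [h1, hR, Matrix.one_mul]
    have h2 : trace ((R * Y)ᵀ * X) = trace (Xᵀ * (R * Y)) := by
      rw [← trace_transpose ((R * Y)ᵀ * X), Matrix.transpose_mul,
        Matrix.transpose_transpose]
    have h3 : trace (Xᵀ * (R * Y)) = trace (R * (Y * Xᵀ)) := by
      rw [trace_mul_comm, Matrix.mul_assoc]
    simp only [trace_add, trace_sub, h2, h3]
    ring
  -- conclude
  unfold frobNorm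
  apply Real.sqrt_le_sqrt
  rw [frob_sq_eq_trace, frob_sq_eq_trace, expand _ hQ0, expand _ hQ, hopt]
  have := key Q hQ
  linarith
end
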